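/- Let S₁, S₂, T₁, T₂ be Banach spaces with S₁ ⊕ T₁ ≅ S₂ ⊕ T₂ and T₁, T₂ essentially incomparable. If moreover S₂ is SUFDQ (isomorphic to all of its closed hyperplanes, equivalently B(S₂) contains a Fredholm operator of index 1), then S₂ contains a complemented subspace isomorphic to T₁. -/

import Mathlib

open Module

/-- A bounded operator between (semi)normed spaces is *Fredholm of index `k`* if it has closed
range, finite-dimensional kernel and finite-dimensional cokernel, with
`dim ker - dim coker = k`. -/
def IsFredholmOfIndex {V W : Type*} [SeminormedAddCommGroup V] [NormedSpace ℂ V]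
    [SeminormedAddCommGroup W] [NormedSpace ℂ W] (T : V →L[ℂ] W) (k : ℤ) : Prop :=
  IsClosed (LinearMap.range (T : V →ₗ[ℂ] W) : Set W) ∧ FiniteDimensional ℂ (LinearMap.ker (T : V →ₗ[ℂ] W)) ∧
    FiniteDimensional ℂ (W ⧸ LinearMap.range (T : V →ₗ[ℂ] W)) ∧
    (finrank ℂ (LinearMap.ker (T : V →ₗ[ℂ] W)) : ℤ) - finrank ℂ (W ⧸ LinearMap.range (T : V →ₗ[ℂ] W)) = k

/-- A bounded operator between (semi)normed spaces is *Fredholm* if it has closed range and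
finite-dimensional kernel and cokernel. -/
def IsFredholm {V W : Type*} [SeminormedAddCommGroup V] [NormedSpace ℂ V]
    [SeminormedAddCommGroup W] [NormedSpace ℂ W] (T : V →L[ℂ] W) : Prop :=
  IsClosed (LinearMap.range (T : V →ₗ[ℂ] W) : Set W) ∧ FiniteDimensional ℂ (LinearMap.ker (T : V →ₗ[ℂ] W)) ∧
    FiniteDimensional ℂ (W ⧸ LinearMap.range (T : V →ₗ[ℂ] W))

/-- `T ∈ B(G,H)` is *inessential* if `I_G - S T` is Fredholm for every `S ∈ B(H,G)`. -/
def Inessential {G H : Type*} [SeminormedAddCommGroup G] [NormedSpace ℂ G]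
    [SeminormedAddCommGroup H] [NormedSpace ℂ H] (T : G →L[ℂ] H) : Prop :=
  ∀ S : H →L[ℂ] G, IsFredholm (ContinuousLinearMap.id ℂ G - S.comp T)


/-- If `j` has a continuous left inverse `r`, then the range of `j` is a closed complemented
subspace isomorphic to the domain. -/
theorem retract_aux {X Y : Type*} [NormedAddCommGroup X] [NormedSpace ℂ X]
    [NormedAddCommGroup Y] [NormedSpace ℂ Y] (j : X →L[ℂ] Y) (r : Y →L[ℂ] X)
    (hrj : ∀ x, r (j x) = x) :
    ∃ N : Submodule ℂ Y, N.ClosedComplemented ∧ Nonempty (X ≃L[ℂ] N) := by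
  refine ⟨j.range, ⟨(j.comp r).codRestrict _ (fun y => ⟨r y, rfl⟩), ?_⟩, ⟨?_⟩⟩
  · rintro ⟨_, x, rfl⟩
    ext
    exact congrArg j (hrj x)
  · refine ContinuousLinearEquiv.equivOfInverse (j.codRestrict _ fun x => ⟨x, rfl⟩)
      (r.comp (j.range).subtypeL) (fun x => by exact hrj x) ?_
    rintro ⟨_, x, rfl⟩
    ext
    simp [hrj]

/-- Splitting lemma: a continuous linear map with closed range and finite-dimensional kernel
restricts to an isomorphism from a closed complement of its kernel onto its range. -/
theorem split_aux {E F : Type*} [NormedAddCommGroup E] [NormedSpace ℂ E] [CompleteSpace E]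
    [NormedAddCommGroup F] [NormedSpace ℂ F] [CompleteSpace F] (f : E →L[ℂ] F)
    (hcl : IsClosed (f.range : Set F)) [FiniteDimensional ℂ (f.ker)] :
    ∃ (V : Submodule ℂ E) (e : V ≃L[ℂ] f.range), IsClosed (V : Set E) ∧
      IsCompl (f.ker) V ∧ ∀ v : V, (e v : F) = f v := by
  obtain ⟨V, hVcl, hcompl⟩ :=
    (Submodule.ClosedComplemented.of_finiteDimensional (f.ker)).exists_isClosed_isCompl
  haveI : CompleteSpace V := hVcl.completeSpace_coe
  haveI : CompleteSpace (f.range) := hcl.completeSpace_coe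
  set g : V →L[ℂ] f.range :=
    (f.comp V.subtypeL).codRestrict _ (fun v => ⟨v, rfl⟩) with hg
  have hinj : g.ker = ⊥ := by
    rw [LinearMap.ker_eq_bot']
    rintro ⟨v, hv⟩ hgv
    have hfv : f v = 0 := congrArg Subtype.val hgv
    have : v ∈ f.ker ⊓ V := ⟨hfv, hv⟩
    rw [hcompl.inf_eq_bot] at this
    exact Subtype.ext this
  have hsurj : g.range = ⊤ := by
    rw [LinearMap.range_eq_top]
    rintro ⟨y, x, rfl⟩
    obtain ⟨k, hk, v, hv, hkv⟩ := Submodule.mem_sup.1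
      (hcompl.sup_eq_top ▸ Submodule.mem_top : x ∈ f.ker ⊔ V)
    refine ⟨⟨v, hv⟩, ?_⟩
    ext
    have hk0 : f k = 0 := hk
    simp only [hg, ContinuousLinearMap.coe_codRestrict_apply, ContinuousLinearMap.comp_apply,
      Submodule.subtypeL_apply]
    rw [← hkv, map_add]
    change f v = f k + f v
    rw [hk0, zero_add]
  exact ⟨V, ContinuousLinearEquiv.ofBijective g hinj hsurj, hVcl, hcompl, fun v => rfl⟩


theorem absorb_fin {S₂ : Type*} [NormedAddCommGroup S₂] [NormedSpace ℂ S₂]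
    (η : (S₂ × ℂ) ≃L[ℂ] S₂) : ∀ n : ℕ, Nonempty ((S₂ × (Fin n → ℂ)) ≃L[ℂ] S₂) := by
  intro n
  induction n with
  | zero =>
    refine ⟨ContinuousLinearEquiv.equivOfInverse (ContinuousLinearMap.fst ℂ S₂ (Fin 0 → ℂ))
      (ContinuousLinearMap.inl ℂ S₂ (Fin 0 → ℂ)) (fun p => ?_) (fun s => rfl)⟩
    exact Prod.ext rfl (Subsingleton.elim _ _)
  | succ n ih =>
    obtain ⟨w⟩ := ih
    have e1 : (Fin (n + 1) → ℂ) ≃L[ℂ] ℂ × (Fin n → ℂ) :=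
      ContinuousLinearEquiv.ofFinrankEq (by simp [Nat.add_comm])
    exact ⟨(((ContinuousLinearEquiv.refl ℂ S₂).prodCongr e1).trans
      (LinearIsometryEquiv.prodAssoc ℂ S₂ ℂ (Fin n → ℂ)).toContinuousLinearEquiv.symm).trans
      ((η.prodCongr (ContinuousLinearEquiv.refl ℂ (Fin n → ℂ))).trans w)⟩

theorem absorb_findim {S₂ : Type*} [NormedAddCommGroup S₂] [NormedSpace ℂ S₂]
    (η : (S₂ × ℂ) ≃L[ℂ] S₂) (K : Type*) [NormedAddCommGroup K] [NormedSpace ℂ K]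
    [FiniteDimensional ℂ K] : Nonempty ((S₂ × K) ≃L[ℂ] S₂) := by
  obtain ⟨w⟩ := absorb_fin η (finrank ℂ K)
  have eK : K ≃L[ℂ] (Fin (finrank ℂ K) → ℂ) := ContinuousLinearEquiv.ofFinrankEq (by simp [Nat.add_comm])
  exact ⟨((ContinuousLinearEquiv.refl ℂ S₂).prodCongr eK).trans w⟩

theorem sufdq_absorb_one {S₂ : Type*} [NormedAddCommGroup S₂] [NormedSpace ℂ S₂]
    [CompleteSpace S₂] (F : S₂ →L[ℂ] S₂) (hF : IsFredholmOfIndex F 1) :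
    Nonempty ((S₂ × ℂ) ≃L[ℂ] S₂) := by
  obtain ⟨hclR, hKfin, hQfin, hidx⟩ := hF
  haveI := hKfin
  haveI := hQfin
  obtain ⟨V, e, hVcl, hcompl, -⟩ := split_aux F hclR
  obtain ⟨C, hCcl, hcomplR⟩ :=
    (Submodule.ClosedComplemented.of_quotient_finiteDimensional hclR).exists_isClosed_isCompl
  haveI : FiniteDimensional ℂ C :=
    (Submodule.quotientEquivOfIsCompl _ _ hcomplR).finiteDimensional
  have hC : finrank ℂ C = finrank ℂ (S₂ ⧸ F.range) :=
    (Submodule.quotientEquivOfIsCompl _ _ hcomplR).symm.finrank_eq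
  have hrank : finrank ℂ (C × ℂ) = finrank ℂ (F.ker) := by
    have : finrank ℂ (C × ℂ) = finrank ℂ C + 1 := by simp
    omega
  have eFin : (C × ℂ) ≃L[ℂ] F.ker := ContinuousLinearEquiv.ofFinrankEq hrank
  have E₁ : ((F.ker) × V) ≃L[ℂ] S₂ :=
    Submodule.prodEquivOfClosedCompl _ _ hcompl (ContinuousLinearMap.isClosed_ker F) hVcl
  have E₂ : ((F.range) × C) ≃L[ℂ] S₂ :=
    Submodule.prodEquivOfClosedCompl _ _ hcomplR hclR hCcl
  exact ⟨(((E₂.symm.prodCongr (ContinuousLinearEquiv.refl ℂ ℂ)).trans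
      (LinearIsometryEquiv.prodAssoc ℂ (F.range) C ℂ).toContinuousLinearEquiv).trans
      ((e.symm.prodCongr eFin).trans
        ((ContinuousLinearEquiv.prodComm ℂ V (F.ker)).trans E₁)))⟩

/-- If `S₁ ⊕ T₁ ≅ S₂ ⊕ T₂`, `T₁, T₂` are essentially incomparable and `S₂` is
SUFDQ (i.e. `B(S₂)` contains a Fredholm operator of index `1`), then `S₂` contains a
complemented subspace isomorphic to `T₁`. -/
theorem complemented_copy_of_essentially_incomparable_sufdq (S₁ : Type u)
    [NormedAddCommGroup S₁] [NormedSpace ℂ S₁] [CompleteSpace S₁]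
    (S₂ : Type u) [NormedAddCommGroup S₂] [NormedSpace ℂ S₂] [CompleteSpace S₂]
    (T₁ : Type u) [NormedAddCommGroup T₁] [NormedSpace ℂ T₁] [CompleteSpace T₁]
    (T₂ : Type u) [NormedAddCommGroup T₂] [NormedSpace ℂ T₂] [CompleteSpace T₂]
    (hiso : Nonempty ((S₁ × T₁) ≃L[ℂ] (S₂ × T₂)))
    (hinc : ∀ T : T₁ →L[ℂ] T₂, Inessential T)
    (hSUFDQ : ∃ F : S₂ →L[ℂ] S₂, IsFredholmOfIndex F 1) :
    ∃ N : Submodule ℂ S₂, N.ClosedComplemented ∧ Nonempty (T₁ ≃L[ℂ] N) := by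
  obtain ⟨φ⟩ := hiso
  set A₁ : T₁ →L[ℂ] S₂ :=
    (ContinuousLinearMap.fst ℂ S₂ T₂).comp
      ((φ : (S₁ × T₁) →L[ℂ] (S₂ × T₂)).comp (ContinuousLinearMap.inr ℂ S₁ T₁)) with hA₁
  set A₂ : T₁ →L[ℂ] T₂ :=
    (ContinuousLinearMap.snd ℂ S₂ T₂).comp
      ((φ : (S₁ × T₁) →L[ℂ] (S₂ × T₂)).comp (ContinuousLinearMap.inr ℂ S₁ T₁)) with hA₂
  set B₁ : S₂ →L[ℂ] T₁ :=
    (ContinuousLinearMap.snd ℂ S₁ T₁).comp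
      ((φ.symm : (S₂ × T₂) →L[ℂ] (S₁ × T₁)).comp (ContinuousLinearMap.inl ℂ S₂ T₂)) with hB₁
  set S : T₂ →L[ℂ] T₁ :=
    (ContinuousLinearMap.snd ℂ S₁ T₁).comp
      ((φ.symm : (S₂ × T₂) →L[ℂ] (S₁ × T₁)).comp (ContinuousLinearMap.inr ℂ S₂ T₂)) with hS
  set U : T₁ →L[ℂ] T₁ := B₁.comp A₁ with hUdef
  have hkey : ∀ t : T₁, B₁ (A₁ t) + S (A₂ t) = t := by
    intro t
    have h1 : ((A₁ t, 0) : S₂ × T₂) + ((0, A₂ t) : S₂ × T₂) = φ ((0 : S₁), t) := by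
      simp [hA₁, hA₂]
    have h2 : B₁ (A₁ t) + S (A₂ t) = (φ.symm (((A₁ t, 0) : S₂ × T₂) + ((0, A₂ t) : S₂ × T₂))).2 := by
      rw [map_add]; rfl
    rw [h2, h1, φ.symm_apply_apply]
  have hU : U = ContinuousLinearMap.id ℂ T₁ - S.comp A₂ := by
    ext t
    have := hkey t
    simp only [hUdef, ContinuousLinearMap.comp_apply, ContinuousLinearMap.sub_apply,
      ContinuousLinearMap.id_apply]
    linear_combination (norm := abel) this
  have hFred : IsFredholm U := by rw [hU]; exact hinc A₂ S
  obtain ⟨hclU, hKU, hQU⟩ := hFred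
  haveI := hKU
  haveI := hQU
  obtain ⟨V, e, hVcl, hcompl, hev⟩ := split_aux U hclU
  obtain ⟨p, hp⟩ := Submodule.ClosedComplemented.of_quotient_finiteDimensional hclU
  -- the embedding of V into S₂ with left inverse
  set jV : V →L[ℂ] S₂ := A₁.comp V.subtypeL with hjV
  set rV : S₂ →L[ℂ] V :=
    ((e.symm : U.range →L[ℂ] V)).comp (p.comp B₁) with hrV
  have hVr : ∀ v : V, rV (jV v) = v := by
    intro v
    have h1 : B₁ (A₁ (v : T₁)) = U (v : T₁) := rfl
    have h2 : U (v : T₁) = ((e v : U.range) : T₁) := (hev v).symm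
    have h3 : p (((e v : U.range) : T₁)) = e v := hp (e v)
    simp only [hrV, hjV, ContinuousLinearMap.comp_apply, Submodule.subtypeL_apply,
      ContinuousLinearEquiv.coe_coe, h1, h2, h3, ContinuousLinearEquiv.symm_apply_apply]
  -- absorb the kernel
  obtain ⟨F, hF⟩ := hSUFDQ
  obtain ⟨η⟩ := sufdq_absorb_one F hF
  obtain ⟨Ω⟩ := absorb_findim η (U.ker)
  have D : ((U.ker) × V) ≃L[ℂ] T₁ :=
    Submodule.prodEquivOfClosedCompl _ _ hcompl (ContinuousLinearMap.isClosed_ker U) hVcl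
  set sw : ((U.ker) × V) ≃L[ℂ] (V × (U.ker)) :=
    ContinuousLinearEquiv.prodComm ℂ _ _ with hsw
  set j : T₁ →L[ℂ] S₂ :=
    (Ω : S₂ × (U.ker) →L[ℂ] S₂).comp
      ((jV.prodMap (ContinuousLinearMap.id ℂ (U.ker))).comp
        ((D.symm.trans sw : T₁ →L[ℂ] V × (U.ker)))) with hj
  set r : S₂ →L[ℂ] T₁ :=
    ((sw.symm.trans D : (V × (U.ker)) →L[ℂ] T₁)).comp
      ((rV.prodMap (ContinuousLinearMap.id ℂ (U.ker))).comp
        ((Ω.symm : S₂ →L[ℂ] S₂ × (U.ker)))) with hr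
  have hrj : ∀ t, r (j t) = t := by
    intro t
    simp only [hj, hr, ContinuousLinearMap.comp_apply, ContinuousLinearEquiv.coe_coe,
      ContinuousLinearEquiv.symm_apply_apply, ContinuousLinearMap.coe_prodMap', Prod.map_apply,
      ContinuousLinearEquiv.trans_apply, ContinuousLinearMap.id_apply, hVr,
      ContinuousLinearEquiv.apply_symm_apply, Prod.mk.eta]
    have hswc : ∀ x : (↥(U.ker) × ↥V), sw x = (x.2, x.1) := fun _ => rfl
    have hswc' : ∀ x : (↥V × ↥(U.ker)), sw.symm x = (x.2, x.1) := fun _ => rfl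
    simp only [hswc, hswc', Prod.map, ContinuousLinearMap.id_apply, hVr, Prod.mk.eta,
      ContinuousLinearEquiv.apply_symm_apply]
  exact retract_aux j r hrj
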